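/- Let G be a totally disconnected locally compact group, φ : G → G a topological automorphism, and N a closed normal subgroup with φ(N) = N. Then for every open compact subgroup U of G, C(φ|_N, U ∩ N) = C(φ,U) ∩ N, and h_top(φ) ≥ h_top(φ|_N). -/

import Mathlib

open Filter Topology

variable {G : Type*} [Group G]

/-- The `n`-th `φ`-cotrajectory `Cₙ(φ,U) = ⋂_{i<n} φ^{-i}(U)`. -/
def cotrajN (φ : MulAut G) (U : Subgroup G) (n : ℕ) : Subgroup G :=
  ⨅ i ∈ Finset.range n, Subgroup.comap (φ ^ i).toMonoidHom U

/-- `cₙ = [U : Cₙ(φ,U)]`. -/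
noncomputable def entIdx (φ : MulAut G) (U : Subgroup G) (n : ℕ) : ℕ :=
  (cotrajN φ U n).relIndex U

/-- The topological entropy of `φ` with respect to `U`,
`H_top(φ,U) = lim_n log cₙ / n` (the limit exists, so it equals the `limsup`). -/
noncomputable def Htop (φ : MulAut G) (U : Subgroup G) : ℝ :=
  limsup (fun n : ℕ => Real.log (entIdx φ U n) / n) atTop

/-- The `φ`-cotrajectory `C(φ,U) = ⋂_{n≥0} φ^{-n}(U)`. -/
def cotraj (φ : MulAut G) (U : Subgroup G) : Subgroup G :=
  ⨅ n : ℕ, Subgroup.comap (φ ^ n).toMonoidHom U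

/-- The topological entropy `h_top(φ) = sup {H_top(φ,U) : U open compact subgroup}`. -/
noncomputable def htop [TopologicalSpace G] (φ : MulAut G) : EReal :=
  ⨆ (U : Subgroup G) (_ : IsOpen (U : Set G) ∧ IsCompact (U : Set G)), ((Htop φ U : ℝ) : EReal)

/-! ### Auxiliary lemmas -/

section Aux

set_option linter.unusedSectionVars false

variable {H : Type*} [Group H]

lemma mem_cotrajN (φ : MulAut H) (U : Subgroup H) (n : ℕ) (x : H) :
    x ∈ cotrajN φ U n ↔ ∀ i < n, (φ ^ i) x ∈ U := by
  simp [cotrajN, Subgroup.mem_iInf, Subgroup.mem_comap]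

lemma mem_cotraj (φ : MulAut H) (U : Subgroup H) (x : H) :
    x ∈ cotraj φ U ↔ ∀ i : ℕ, (φ ^ i) x ∈ U := by
  simp [cotraj, Subgroup.mem_iInf, Subgroup.mem_comap]

lemma cotrajN_zero (φ : MulAut H) (U : Subgroup H) : cotrajN φ U 0 = ⊤ := by
  ext x; simp [mem_cotrajN]

lemma cotrajN_succ (φ : MulAut H) (U : Subgroup H) (n : ℕ) :
    cotrajN φ U (n + 1) = cotrajN φ U n ⊓ Subgroup.comap (φ ^ n).toMonoidHom U := by
  ext x
  simp only [mem_cotrajN, Subgroup.mem_inf, Subgroup.mem_comap, Nat.lt_succ_iff_lt_or_eq]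
  constructor
  · exact fun h => ⟨fun i hi => h i (Or.inl hi), h n (Or.inr rfl)⟩
  · rintro ⟨h1, h2⟩ i (hi | rfl)
    · exact h1 i hi
    · exact h2

lemma cotrajN_le (φ : MulAut H) (U : Subgroup H) {n : ℕ} (hn : 1 ≤ n) :
    cotrajN φ U n ≤ U := by
  intro x hx
  have := (mem_cotrajN φ U n x).mp hx 0 hn
  simpa using this

lemma cotrajN_le_comap (φ : MulAut H) (U : Subgroup H) {i n : ℕ} (hi : i < n) :
    cotrajN φ U n ≤ Subgroup.comap (φ ^ i).toMonoidHom U := by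
  intro x hx
  exact (mem_cotrajN φ U n x).mp hx i hi

lemma cotrajN_mono (φ : MulAut H) {U V : Subgroup H} (h : U ≤ V) (n : ℕ) :
    cotrajN φ U n ≤ cotrajN φ V n := by
  intro x hx
  rw [mem_cotrajN] at hx ⊢
  exact fun i hi => h (hx i hi)

section Top

variable [TopologicalSpace H] [IsTopologicalGroup H]

lemma continuous_mulAut_pow (φ : MulAut H) (hφ : Continuous ⇑φ) (n : ℕ) :
    Continuous ⇑(φ ^ n) := by
  induction n with
  | zero => simpa [pow_zero] using continuous_id
  | succ n ih =>
      have h : ⇑(φ ^ (n + 1)) = ⇑(φ ^ n) ∘ ⇑φ := by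
        funext x; simp [pow_succ]
      rw [h]; exact ih.comp hφ

lemma isOpen_comap_pow (φ : MulAut H) (hφ : Continuous ⇑φ) {U : Subgroup H}
    (hU : IsOpen (U : Set H)) (n : ℕ) :
    IsOpen ((Subgroup.comap (φ ^ n).toMonoidHom U : Subgroup H) : Set H) :=
  hU.preimage (continuous_mulAut_pow φ hφ n)

lemma isOpen_cotrajN (φ : MulAut H) (hφ : Continuous ⇑φ) {U : Subgroup H}
    (hU : IsOpen (U : Set H)) (n : ℕ) :
    IsOpen ((cotrajN φ U n : Subgroup H) : Set H) := by
  induction n with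
  | zero => rw [cotrajN_zero]; simp
  | succ n ih =>
      rw [cotrajN_succ, Subgroup.coe_inf]
      exact ih.inter (isOpen_comap_pow φ hφ hU n)

lemma relindex_ne_zero_aux {V U : Subgroup H} (hV : IsOpen (V : Set H))
    (hU : IsCompact (U : Set H)) : V.relIndex U ≠ 0 := by
  haveI : CompactSpace U := isCompact_iff_compactSpace.mp hU
  have hopen : IsOpen ((V.subgroupOf U : Subgroup U) : Set U) := by
    rw [Subgroup.subgroupOf, Subgroup.coe_comap, Subgroup.coe_subtype]
    exact hV.preimage continuous_subtype_val
  haveI := Subgroup.quotient_finite_of_isOpen (V.subgroupOf U) hopen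
  exact Subgroup.index_ne_zero_of_finite

lemma entIdx_le_pow (φ : MulAut H) (hφ : Continuous ⇑φ) {U : Subgroup H}
    (hUo : IsOpen (U : Set H)) (hUc : IsCompact (U : Set H)) (n : ℕ) :
    entIdx φ U n ≤ (Subgroup.comap φ.toMonoidHom U).relIndex U ^ n := by
  set k := (Subgroup.comap φ.toMonoidHom U).relIndex U with hkdef
  have hφU : IsOpen ((Subgroup.comap φ.toMonoidHom U : Subgroup H) : Set H) :=
    hUo.preimage hφ
  have hk : k ≠ 0 := relindex_ne_zero_aux hφU hUc
  have hk1 : 1 ≤ k := Nat.one_le_iff_ne_zero.mpr hk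
  induction n with
  | zero => simp [entIdx, cotrajN_zero, Subgroup.relIndex_top_left]
  | succ n ih =>
      rcases Nat.eq_zero_or_pos n with rfl | hn
      · have h1 : cotrajN φ U 1 = U := by
          ext x
          rw [mem_cotrajN]
          constructor
          · intro h; simpa using h 0 Nat.zero_lt_one
          · intro h i hi
            have hi0 : i = 0 := Nat.lt_one_iff.mp hi
            subst hi0; simpa using h
        simpa [entIdx, h1, Subgroup.relIndex_self] using hk1
      · obtain ⟨m, rfl⟩ : ∃ m, n = m + 1 := ⟨n - 1, (Nat.succ_pred_eq_of_pos hn).symm⟩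
        set A := cotrajN φ U (m + 1) with hA
        set B := Subgroup.comap (φ ^ (m + 1)).toMonoidHom U with hB
        set D := Subgroup.comap (φ ^ m).toMonoidHom U with hD
        have hAU : A ≤ U := cotrajN_le φ U (Nat.succ_le_succ (Nat.zero_le m))
        have hAD : A ≤ D := cotrajN_le_comap φ U (Nat.lt_succ_self m)
        have hBD : B.relIndex D = k := by
          have hcomp : B = Subgroup.comap (φ ^ m).toMonoidHom
              (Subgroup.comap φ.toMonoidHom U) := by
            rw [hB, Subgroup.comap_comap]
            congr 1
            ext x
            simp [pow_succ']
          rw [hcomp, hD, Subgroup.relIndex_comap,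
            Subgroup.map_comap_eq_self_of_surjective (φ ^ m).surjective]
        have hBDne : B.relIndex D ≠ 0 := hBD ▸ hk
        have hBA : B.relIndex A ≤ k := hBD ▸ Subgroup.relIndex_le_of_le_right hAD hBDne
        have htower : (A ⊓ B).relIndex A * A.relIndex U = (A ⊓ B).relIndex U :=
          Subgroup.relIndex_mul_relIndex _ _ _ inf_le_left hAU
        have hstep : entIdx φ U (m + 2) = B.relIndex A * entIdx φ U (m + 1) := by
          rw [entIdx, cotrajN_succ, ← hA, ← hB, ← htower, Subgroup.inf_relIndex_left, entIdx]
        rw [hstep, pow_succ, mul_comm (k ^ (m + 1)) k]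
        exact Nat.mul_le_mul hBA ih

open scoped Pointwise in
lemma exists_mul_closure_nhd' {W : Set H} (WClopen : IsClopen W) (hWc : IsCompact W) :
    ∃ T ∈ 𝓝 (1 : H), W * T ⊆ W := by
  apply hWc.induction_on (p := fun S ↦ ∃ T ∈ 𝓝 (1 : H), S * T ⊆ W)
    ⟨Set.univ, by simp only [univ_mem, Set.empty_mul, Set.empty_subset, and_self]⟩
    (fun _ _ huv ⟨T, hT, mem⟩ ↦ ⟨T, hT, (Set.mul_subset_mul_right huv).trans mem⟩)
    fun U V ⟨T₁, hT₁, mem1⟩ ⟨T₂, hT₂, mem2⟩ ↦ ⟨T₁ ∩ T₂, inter_mem hT₁ hT₂, by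
      rw [Set.union_mul]
      exact Set.union_subset (Set.mul_subset_mul_left Set.inter_subset_left |>.trans mem1)
        (Set.mul_subset_mul_left Set.inter_subset_right |>.trans mem2) ⟩
  intro x memW
  have : (x, 1) ∈ (fun p : H × H ↦ p.1 * p.2) ⁻¹' W := by simp [memW]
  rcases isOpen_prod_iff.mp (continuous_mul.isOpen_preimage W <| WClopen.2) x 1 this with
    ⟨U, V, Uopen, Vopen, xmemU, onememV, prodsub⟩
  have h6 : U * V ⊆ W := Set.mul_subset_iff.mpr (fun _ hx _ hy ↦ prodsub (Set.mk_mem_prod hx hy))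
  exact ⟨U ∩ W, ⟨U, Uopen.mem_nhds xmemU, W, fun _ a ↦ a, rfl⟩,
    V, IsOpen.mem_nhds Vopen onememV,
    fun _ a ↦ h6 ((Set.mul_subset_mul_right Set.inter_subset_left) a)⟩

open scoped Pointwise in
/-- Van Dantzig's theorem: a totally disconnected locally compact group has a basis of
compact open subgroups at the identity. -/
lemma vanDantzig [LocallyCompactSpace H] [TotallyDisconnectedSpace H]
    {O : Set H} (hO : IsOpen O) (h1 : (1 : H) ∈ O) :
    ∃ U : Subgroup H, IsOpen (U : Set H) ∧ IsCompact (U : Set H) ∧ (U : Set H) ⊆ O := by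
  haveI : T2Space H := IsTopologicalGroup.t2Space_iff_one_closed.mpr isClosed_singleton
  obtain ⟨s, hs, hxs, hsO⟩ := exists_compact_subset hO h1
  obtain ⟨W, hWclopen, h1W, hWs⟩ := (loc_compact_Haus_tot_disc_of_zero_dim).mem_nhds_iff.mp
    (isOpen_interior.mem_nhds hxs)
  have hWc : IsCompact W := hs.of_isClosed_subset hWclopen.1 (hWs.trans interior_subset)
  obtain ⟨S0, Smemnhds, mulclose⟩ := exists_mul_closure_nhd' hWclopen hWc
  rcases mem_nhds_iff.mp Smemnhds with ⟨U0, UsubS, Uopen, onememU⟩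
  set V : Set H := U0 ∩ U0⁻¹ with hVdef
  have hV1 : V ∈ 𝓝 1 := by
    refine Filter.inter_mem (Uopen.mem_nhds onememU) ?_
    simpa using Uopen.inv.mem_nhds (by simpa using onememU)
  have hVinv : V⁻¹ = V := by simp [hVdef, Set.inter_comm]
  have hVopen : IsOpen V := Uopen.inter Uopen.inv
  have hVmul : W * V ⊆ W := fun a ha ↦
    mulclose (Set.mul_subset_mul_left UsubS (Set.mul_subset_mul_left Set.inter_subset_left ha))
  let S : Subgroup H := {
    carrier := ⋃ n, V ^ (n + 1)
    mul_mem' := fun ha hb ↦ by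
      rcases Set.mem_iUnion.mp ha with ⟨k, hk⟩
      rcases Set.mem_iUnion.mp hb with ⟨l, hl⟩
      apply Set.mem_iUnion.mpr
      use k + 1 + l
      rw [add_assoc, pow_add]
      exact Set.mul_mem_mul hk hl
    one_mem' := by
      apply Set.mem_iUnion.mpr
      use 0
      simp [mem_of_mem_nhds hV1]
    inv_mem' := fun ha ↦ by
      rcases Set.mem_iUnion.mp ha with ⟨k, hk⟩
      apply Set.mem_iUnion.mpr
      use k
      rw [← hVinv]
      simpa only [inv_pow, Set.mem_inv, inv_inv] using hk }
  have hSopen : IsOpen (S : Set H) := by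
    refine isOpen_iUnion (fun n ↦ ?_)
    rw [pow_succ]
    exact hVopen.mul_left
  have mulVpow (n : ℕ) : W * V ^ (n + 1) ⊆ W := by
    induction' n with n ih
    · simpa using hVmul
    · rw [pow_succ, ← mul_assoc]
      exact (Set.mul_subset_mul_right ih).trans hVmul
  have hSW : (S : Set H) ⊆ W := by
    refine Set.iUnion_subset fun i a ha ↦ mulVpow i ?_
    rw [Set.mem_mul]
    exact ⟨1, h1W, a, ha, one_mul a⟩
  refine ⟨S, hSopen, ?_, hSW.trans ((hWs.trans interior_subset).trans hsO)⟩
  exact hWc.of_isClosed_subset (S.isClosed_of_isOpen hSopen) hSW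

end Top

end Aux

lemma log_nat_nonneg (m : ℕ) : 0 ≤ Real.log m := by
  rcases Nat.eq_zero_or_pos m with rfl | h
  · simp
  · exact Real.log_nonneg (by exact_mod_cast h)

lemma limsup_log_div_le_limsup_log_div {a b : ℕ → ℕ} {K kb : ℕ} (hK : K ≠ 0)
    (hb0 : ∀ n, b n ≠ 0) (hbk : ∀ n, b n ≤ kb ^ n) (hab : ∀ n, a n ≤ b n * K) :
    limsup (fun n : ℕ => Real.log (a n) / n) atTop ≤
      limsup (fun n : ℕ => Real.log (b n) / n) atTop := by
  set f : ℕ → ℝ := fun n => Real.log (a n) / n with hf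
  set g : ℕ → ℝ := fun n => Real.log (b n) / n with hg
  have hf0 : ∀ n, 0 ≤ f n := fun n => div_nonneg (log_nat_nonneg _) (Nat.cast_nonneg n)
  have hg0 : ∀ n, 0 ≤ g n := fun n => div_nonneg (log_nat_nonneg _) (Nat.cast_nonneg n)
  have hgb : ∀ n, g n ≤ Real.log kb := by
    intro n
    rcases Nat.eq_zero_or_pos n with rfl | hn
    · simpa [hg] using log_nat_nonneg kb
    · have h1 : Real.log (b n) ≤ Real.log ((kb : ℝ) ^ n) := by
        rcases Nat.eq_zero_or_pos (b n) with h | h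
        · rw [h]; push_cast; rw [Real.log_zero, Real.log_pow]
          positivity
        · apply Real.log_le_log (by exact_mod_cast h)
          have := hbk n
          exact_mod_cast this
      rw [Real.log_pow] at h1
      rw [hg]
      have hnpos : (0:ℝ) < n := by exact_mod_cast hn
      calc Real.log (b n) / n ≤ (n * Real.log kb) / n := by gcongr
          _ = Real.log kb := by
            field_simp
  have hgbdd : IsBoundedUnder (· ≤ ·) atTop g :=
    isBoundedUnder_of ⟨Real.log kb, fun n => hgb n⟩
  have hgcob : IsCoboundedUnder (· ≤ ·) atTop g :=
    IsCoboundedUnder.of_frequently_ge (Frequently.of_forall fun n => hg0 n)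
  refine le_of_forall_pos_le_add fun ε hε => ?_
  have hpt : ∀ n : ℕ, 1 ≤ n → f n ≤ g n + Real.log K / n := by
    intro n hn
    have h1 : Real.log (a n) ≤ Real.log (b n) + Real.log K := by
      rcases Nat.eq_zero_or_pos (a n) with h | h
      · rw [h]
        push_cast
        rw [Real.log_zero]
        exact add_nonneg (log_nat_nonneg _) (log_nat_nonneg _)
      · calc Real.log (a n) ≤ Real.log ((b n * K : ℕ)) :=
              Real.log_le_log (by exact_mod_cast h) (by exact_mod_cast hab n)
          _ = Real.log (b n) + Real.log K := by
              push_cast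
              exact Real.log_mul (by exact_mod_cast hb0 n) (by exact_mod_cast hK)
    have hnpos : (0:ℝ) < n := by exact_mod_cast hn
    calc f n = Real.log (a n) / n := rfl
      _ ≤ (Real.log (b n) + Real.log K) / n := by gcongr
      _ = g n + Real.log K / n := by rw [add_div]
  have hev : ∀ᶠ n in atTop, f n ≤ g n + ε := by
    have hten : Tendsto (fun n : ℕ => Real.log K / n) atTop (𝓝 0) :=
      tendsto_const_div_atTop_nhds_zero_nat _
    filter_upwards [hten.eventually (eventually_le_nhds hε), eventually_ge_atTop 1] with n hn hn1
    exact (hpt n hn1).trans (by linarith)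
  calc limsup f atTop ≤ limsup (fun n => g n + ε) atTop :=
        limsup_le_limsup hev
          (IsCoboundedUnder.of_frequently_ge (Frequently.of_forall fun n => hf0 n))
          (isBoundedUnder_of ⟨Real.log kb + ε, fun n => add_le_add (hgb n) le_rfl⟩)
    _ = limsup g atTop + ε := limsup_add_const atTop g ε hgbdd hgcob

theorem monotonicity_subgroup
    [TopologicalSpace G] [IsTopologicalGroup G] [LocallyCompactSpace G] [TotallyDisconnectedSpace G]
    (φ : MulAut G) (hφ : Continuous φ) (hφ' : Continuous φ⁻¹)
    (N : Subgroup G) [N.Normal] (hNc : IsClosed (N : Set G))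
    (hNφ : Subgroup.map φ.toMonoidHom N = N)
    (φN : MulAut ↥N) (hres : ∀ x : ↥N, (φN x : G) = φ (x : G)) :
    (∀ U : Subgroup G, IsOpen (U : Set G) → IsCompact (U : Set G) →
        cotraj φN (U.subgroupOf N) = (cotraj φ U).subgroupOf N) ∧
      htop φN ≤ htop φ := by
  have hφN : Continuous (⇑φN) := by
    rw [continuous_induced_rng]
    have h : (Subtype.val ∘ ⇑φN : ↥N → G) = ⇑φ ∘ Subtype.val := funext hres
    rw [h]
    exact hφ.comp continuous_subtype_val
  have hpow : ∀ (i : ℕ) (x : ↥N), (((φN ^ i) x : ↥N) : G) = (φ ^ i) (x : G) := by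
    intro i
    induction i with
    | zero => intro x; simp
    | succ i ih =>
        intro x
        rw [pow_succ, pow_succ, MulAut.mul_apply, MulAut.mul_apply, ih (φN x), hres x]
  constructor
  · intro U _ _
    ext x
    rw [Subgroup.mem_subgroupOf, mem_cotraj, mem_cotraj]
    refine forall_congr' fun n => ?_
    rw [Subgroup.mem_subgroupOf, hpow n x]
  · refine iSup₂_le fun W hW => ?_
    obtain ⟨hWo, hWc⟩ := hW
    -- find an open compact subgroup `U` of `G` with `U.subgroupOf N ≤ W`
    obtain ⟨O, hOopen, hOW⟩ := isOpen_induced_iff.mp hWo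
    have h1O : (1 : G) ∈ O := by
      have h1W : (1 : ↥N) ∈ (W : Set ↥N) := W.one_mem
      rw [← hOW] at h1W
      simpa using h1W
    obtain ⟨U, hUo, hUc, hUO⟩ := vanDantzig hOopen h1O
    set W' : Subgroup ↥N := U.subgroupOf N with hW'def
    have hW'W : W' ≤ W := by
      intro x hx
      rw [hW'def, Subgroup.mem_subgroupOf] at hx
      have : (x : G) ∈ O := hUO hx
      have hxW : x ∈ Subtype.val ⁻¹' O := this
      rw [hOW] at hxW
      exact hxW
    have hW'o : IsOpen (W' : Set ↥N) := by
      rw [hW'def, Subgroup.subgroupOf, Subgroup.coe_comap, Subgroup.coe_subtype]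
      exact hUo.preimage continuous_subtype_val
    set K := W'.relIndex W with hKdef
    have hK : K ≠ 0 := relindex_ne_zero_aux hW'o hWc
    have hK1 : 1 ≤ K := Nat.one_le_iff_ne_zero.mpr hK
    set k := (Subgroup.comap φ.toMonoidHom U).relIndex U with hkdef
    have hb0 : ∀ n, entIdx φ U n ≠ 0 := fun n =>
      relindex_ne_zero_aux (isOpen_cotrajN φ hφ hUo n) hUc
    have hbk : ∀ n, entIdx φ U n ≤ k ^ n := entIdx_le_pow φ hφ hUo hUc
    -- `Cₙ(φN, W') = Cₙ(φ,U) ∩ N`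
    have hP1 : ∀ n, cotrajN φN W' n = (cotrajN φ U n).subgroupOf N := by
      intro n
      ext x
      rw [Subgroup.mem_subgroupOf, mem_cotrajN, mem_cotrajN]
      refine forall_congr' fun i => imp_congr_right fun _ => ?_
      rw [hW'def, Subgroup.mem_subgroupOf, hpow i x]
    -- `entIdx φN W' n ≤ entIdx φ U n`
    have hP2 : ∀ n, entIdx φN W' n ≤ entIdx φ U n := by
      intro n
      have h1 : entIdx φN W' n = (cotrajN φ U n).relIndex (N ⊓ U) := by
        rw [entIdx, hP1 n, hW'def, Subgroup.subgroupOf, Subgroup.subgroupOf,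
          Subgroup.relIndex_comap, Subgroup.map_comap_eq, Subgroup.range_subtype]
      rw [h1, entIdx]
      exact Subgroup.relIndex_le_of_le_right inf_le_right (hb0 n)
    -- `entIdx φN W n ≤ entIdx φN W' n * K`
    have hP3 : ∀ n, entIdx φN W n ≤ entIdx φN W' n * K := by
      intro n
      rcases Nat.eq_zero_or_pos n with rfl | hn
      · simpa [entIdx, cotrajN_zero, Subgroup.relIndex_top_left] using hK1
      · have hmono : cotrajN φN W' n ≤ cotrajN φN W n := cotrajN_mono φN hW'W n
        have hne : (cotrajN φN W' n).relIndex W ≠ 0 :=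
          relindex_ne_zero_aux (isOpen_cotrajN φN hφN hW'o n) hWc
        have h1 : entIdx φN W n ≤ (cotrajN φN W' n).relIndex W :=
          Subgroup.relIndex_le_of_le_left hmono hne
        have h2 : (cotrajN φN W' n).relIndex W' * W'.relIndex W
            = (cotrajN φN W' n).relIndex W :=
          Subgroup.relIndex_mul_relIndex _ _ _ (cotrajN_le φN W' hn) hW'W
        calc entIdx φN W n ≤ (cotrajN φN W' n).relIndex W := h1
          _ = (cotrajN φN W' n).relIndex W' * W'.relIndex W := h2.symm
          _ = entIdx φN W' n * K := rfl
    have hab : ∀ n, entIdx φN W n ≤ entIdx φ U n * K := fun n =>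
      (hP3 n).trans (Nat.mul_le_mul_right K (hP2 n))
    have hmain : Htop φN W ≤ Htop φ U :=
      limsup_log_div_le_limsup_log_div hK hb0 hbk hab
    refine le_trans ?_ (le_iSup₂_of_le U ⟨hUo, hUc⟩ le_rfl)
    exact_mod_cast hmain
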